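/- Let q be a prime number, k the algebraic closure of 𝔽_q, and m ≥ 2, d ≥ 2 integers with q ∤ d. Let a = (a_1, …, a_{m−1}) ∈ k^{m−1} with the partial sums A_i = ∑_{k=i}^{m−1} a_k pairwise distinct and all nonzero, so that R = k[x_1, …, x_m]/⟨g_1, …, g_{m−1}⟩ (with g_j = x_j^d − x_{j+1}^d − a_j) is an integral domain. Let L be the fraction field of R and K ⊆ L the subfield generated over k by the image of x_1. Then L is a finite extension of K of degree [L : K] = d^{m−1}. -/

import Mathlib

open scoped BigOperators

/-- The polynomial `g_j = x_j^d − x_{j+1}^d − a_j` (0-indexed). -/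
noncomputable def gPoly {k : Type*} [CommRing k] (m d : ℕ) (a : Fin (m - 1) → k)
    (j : Fin (m - 1)) : MvPolynomial (Fin m) k :=
  MvPolynomial.X ⟨j.1, by have := j.isLt; omega⟩ ^ d -
    MvPolynomial.X ⟨j.1 + 1, by have := j.isLt; omega⟩ ^ d -
    MvPolynomial.C (a j)

/-- The partial sum `A_i = ∑_{k ≥ i} a_k`. -/
def partialSum {k : Type*} [AddCommMonoid k] {n : ℕ} (a : Fin n → k) (i : Fin n) : k :=
  ∑ t ∈ Finset.Ici i, a t

/-- The coordinate ring `R = k[x_1, …, x_m]/⟨g_1, …, g_{m−1}⟩` of the curve. -/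
abbrev curveRing (q : ℕ) [Fact q.Prime] (m d : ℕ)
    (a : Fin (m - 1) → AlgebraicClosure (ZMod q)) : Type _ :=
  MvPolynomial (Fin m) (AlgebraicClosure (ZMod q)) ⧸ Ideal.span (Set.range (gPoly m d a))

set_option synthInstance.maxHeartbeats 1000000
set_option maxHeartbeats 4000000
set_option linter.unusedSectionVars false
set_option linter.unusedVariables false
set_option linter.unnecessarySimpa false

namespace S17
open MvPolynomial

open MvPolynomial

variable {F : Type*} [Field F]

abbrev QRing (n d : ℕ) (a : Fin (n + 1) → F) : Type _ :=
  MvPolynomial (Fin (n + 2)) F ⧸ Ideal.span (Set.range (gPoly (n + 2) d a))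

variable (n d : ℕ) (a : Fin (n + 1) → F)

noncomputable def mkQ : MvPolynomial (Fin (n + 2)) F →+* QRing n d a :=
  Ideal.Quotient.mk _

noncomputable def xv (i : Fin (n + 2)) : QRing n d a := mkQ n d a (X i)

noncomputable def x1 : QRing n d a := xv n d a 0

noncomputable def cQ : F →+* QRing n d a := (mkQ n d a).comp (C : F →+* _)

lemma algebraMap_eq_cQ (c : F) : algebraMap F (QRing n d a) c = cQ n d a c := rfl

noncomputable def bb (e : Fin (n + 1) → Fin d) : QRing n d a :=
  ∏ j : Fin (n + 1), xv n d a j.succ ^ (e j : ℕ)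

lemma rel (j : Fin (n + 1)) :
    xv n d a j.succ ^ d = xv n d a j.castSucc ^ d - cQ n d a (a j) := by
  have h : mkQ n d a (gPoly (n + 2) d a j) = 0 :=
    Ideal.Quotient.eq_zero_iff_mem.2 (Ideal.subset_span ⟨j, rfl⟩)
  have hg : gPoly (n + 2) d a j = X j.castSucc ^ d - X j.succ ^ d - C (a j) := rfl
  rw [hg, map_sub, map_sub, map_pow, map_pow, sub_sub, sub_eq_zero] at h
  simp only [xv, cQ, RingHom.comp_apply]
  rw [h]; ring

noncomputable def algA {n d : ℕ} {a : Fin (n + 1) → F} : Algebra (Polynomial F) (QRing n d a) :=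
  ((Polynomial.aeval (x1 n d a)).toRingHom).toAlgebra

attribute [local instance] algA

lemma smul_eq (f : Polynomial F) (r : QRing n d a) :
    f • r = Polynomial.aeval (x1 n d a) f * r := by
  rw [Algebra.smul_def]; rfl

/-- the `F[X]`-span of the monomials. -/
noncomputable def VV : Submodule (Polynomial F) (QRing n d a) :=
  Submodule.span (Polynomial F) (Set.range (bb n d a))

lemma bb_mem (e : Fin (n + 1) → Fin d) : bb n d a e ∈ VV n d a :=
  Submodule.subset_span ⟨e, rfl⟩

lemma bb_update (e : Fin (n + 1) → Fin d) (j : Fin (n + 1)) (v : Fin d) :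
    bb n d a (Function.update e j v)
      = xv n d a j.succ ^ (v : ℕ) * ∏ k ∈ Finset.univ.erase j, xv n d a k.succ ^ (e k : ℕ) := by
  rw [bb, ← Finset.mul_prod_erase _ _ (Finset.mem_univ j), Function.update_self]
  congr 1
  exact Finset.prod_congr rfl fun k hk => by
    rw [Function.update_of_ne (Finset.ne_of_mem_erase hk)]

lemma bb_eq_erase (e : Fin (n + 1) → Fin d) (j : Fin (n + 1)) :
    bb n d a e = xv n d a j.succ ^ (e j : ℕ) * ∏ k ∈ Finset.univ.erase j, xv n d a k.succ ^ (e k : ℕ) :=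
  (Finset.mul_prod_erase _ _ (Finset.mem_univ j)).symm

lemma xpow_mul_bb_mem (i : Fin (n + 2)) (e : Fin (n + 1) → Fin d) :
    xv n d a i ^ d * bb n d a e ∈ VV n d a := by
  induction i using Fin.induction with
  | zero =>
    have : xv n d a 0 ^ d * bb n d a e = (Polynomial.X ^ d : Polynomial F) • bb n d a e := by
      rw [smul_eq]; simp [x1]
    rw [this]
    exact Submodule.smul_mem _ _ (bb_mem n d a e)
  | succ j ih =>
    rw [rel, sub_mul]
    refine Submodule.sub_mem _ (ih) ?_
    have : cQ n d a (a j) * bb n d a e = (Polynomial.C (a j) : Polynomial F) • bb n d a e := by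
      rw [smul_eq]; simp [algebraMap_eq_cQ]
    rw [this]
    exact Submodule.smul_mem _ _ (bb_mem n d a e)

lemma xv_mul_bb_mem (i : Fin (n + 2)) (e : Fin (n + 1) → Fin d) :
    xv n d a i * bb n d a e ∈ VV n d a := by
  induction i using Fin.cases with
  | zero =>
    have : xv n d a 0 * bb n d a e = (Polynomial.X : Polynomial F) • bb n d a e := by
      rw [smul_eq]; simp [x1]
    rw [this]; exact Submodule.smul_mem _ _ (bb_mem n d a e)
  | succ j =>
    by_cases h : (e j : ℕ) + 1 < d
    · -- e j + 1 < d
      have : xv n d a j.succ * bb n d a e = bb n d a (Function.update e j ⟨(e j : ℕ) + 1, h⟩) := by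
        rw [bb_update, bb_eq_erase n d a e j, ← mul_assoc, ← pow_succ']
      rw [this]; exact bb_mem _ _ _ _
    · -- e j + 1 = d
      have hd : (e j : ℕ) + 1 = d := by have := (e j).2; omega
      have : xv n d a j.succ * bb n d a e
          = xv n d a j.succ ^ d * bb n d a (Function.update e j ⟨0, by omega⟩) := by
        rw [bb_update, bb_eq_erase n d a e j, pow_zero, one_mul, ← mul_assoc, ← pow_succ', hd]
      rw [this]; exact xpow_mul_bb_mem n d a j.succ _

lemma xv_mul_mem (i : Fin (n + 2)) (v : QRing n d a) (hv : v ∈ VV n d a) :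
    xv n d a i * v ∈ VV n d a := by
  induction hv using Submodule.span_induction with
  | mem w hw => obtain ⟨e, rfl⟩ := hw; exact xv_mul_bb_mem n d a i e
  | zero => simpa using Submodule.zero_mem _
  | add x y _ _ hx hy => rw [mul_add]; exact Submodule.add_mem _ hx hy
  | smul c x _ hx => rw [mul_smul_comm]; exact Submodule.smul_mem _ _ hx

lemma mk_mul_mem (p : MvPolynomial (Fin (n + 2)) F) :
    ∀ v ∈ VV n d a, mkQ n d a p * v ∈ VV n d a := by
  induction p using MvPolynomial.induction_on with
  | C c =>
    intro v hv
    have : mkQ n d a (C c) * v = (Polynomial.C c : Polynomial F) • v := by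
      rw [smul_eq]; simp [algebraMap_eq_cQ, cQ]
    rw [this]; exact Submodule.smul_mem _ _ hv
  | add p q hp hq =>
    intro v hv
    rw [map_add, add_mul]
    exact Submodule.add_mem _ (hp v hv) (hq v hv)
  | mul_X p i hp =>
    intro v hv
    rw [map_mul, mul_assoc]
    exact hp _ (xv_mul_mem n d a i v hv)

lemma bb_base (hd : 0 < d) : bb n d a (fun _ => ⟨0, hd⟩) = 1 := by
  simp [bb]

lemma span_top (hd : 0 < d) (r : QRing n d a) : r ∈ VV n d a := by
  obtain ⟨p, rfl⟩ := Ideal.Quotient.mk_surjective r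
  have := mk_mul_mem n d a p _ (bb_mem n d a (fun _ => ⟨0, hd⟩))
  rwa [bb_base, mul_one] at this



abbrev Om (F : Type*) [Field F] : Type _ := AlgebraicClosure (FractionRing (Polynomial F))

noncomputable def evt' : Polynomial F →+* Om F :=
  (algebraMap (FractionRing (Polynomial F)) (Om F)).comp (algebraMap (Polynomial F) _)

lemma evt'_inj : Function.Injective (evt' (F := F)) := by
  rw [evt', RingHom.coe_comp]
  exact (RingHom.injective _).comp (IsFractionRing.injective _ _)

noncomputable def cF : F →+* Om F := (evt' (F := F)).comp (Polynomial.C)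

lemma cF_inj : Function.Injective (cF (F := F)) := RingHom.injective _

noncomputable def tau (F : Type*) [Field F] : Om F := evt' Polynomial.X

lemma evt'_eq (f : Polynomial F) : Polynomial.eval₂ (cF (F := F)) (tau F) f = evt' f := by
  rw [cF, tau, ← Polynomial.hom_eval₂, Polynomial.eval₂_C_X]

section Beta
variable (n d : ℕ) (a : Fin (n + 1) → F)

/-- extended constants -/
noncomputable def aF (i : ℕ) : F := if h : i < n + 1 then a ⟨i, h⟩ else 0

/-- partial sums -/
noncomputable def sF (i : ℕ) : F := ∑ k ∈ Finset.range i, aF n a k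

variable (hd : 0 < d)

noncomputable def bet : ℕ → Om F
  | 0 => tau F
  | i + 1 => Classical.choose
      (IsAlgClosed.exists_pow_nat_eq (bet i ^ d - cF (aF n a i)) hd)

lemma bet_spec (i : ℕ) : bet n d a hd (i + 1) ^ d = bet n d a hd i ^ d - cF (aF n a i) :=
  Classical.choose_spec (IsAlgClosed.exists_pow_nat_eq _ hd)

lemma bet_pow (i : ℕ) : bet n d a hd i ^ d = tau F ^ d - cF (sF n a i) := by
  induction i with
  | zero => simp [bet, sF]
  | succ i ih =>
    rw [bet_spec, ih,
      show sF n a (i + 1) = sF n a i + aF n a i by rw [sF, sF, Finset.sum_range_succ], map_add]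
    ring

lemma bet_ne (i : ℕ) : bet n d a hd i ≠ 0 := by
  intro h0
  have h1 : (0 : Om F) = tau F ^ d - cF (sF n a i) := by
    rw [← bet_pow n d a hd i, h0, zero_pow (by omega)]
  have h2 : evt' ((Polynomial.X : Polynomial F) ^ d - Polynomial.C (sF n a i)) = 0 := by
    rw [map_sub, map_pow]
    rw [← tau]
    have : evt' (Polynomial.C (sF n a i)) = cF (sF n a i) := rfl
    rw [this, ← h1]
  have h3 : (Polynomial.X : Polynomial F) ^ d - Polynomial.C (sF n a i) = 0 := by
    apply evt'_inj; rw [h2, map_zero]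
  exact Polynomial.X_pow_sub_C_ne_zero hd _ h3

end Beta

lemma exists_omega (d : ℕ) (hd : 0 < d) (hdF : (d : F) ≠ 0) :
    ∃ ω : Om F, IsPrimitiveRoot ω d := by
  haveI : NeZero ((d : ℕ) : Om F) := ⟨by
    rw [← map_natCast (cF (F := F)) d]
    simpa using fun h => hdF (cF_inj (by simpa using h))⟩
  exact HasEnoughRootsOfUnity.exists_primitiveRoot (Om F) d

lemma pow_mod {Ω : Type*} [CommRing Ω] {d : ℕ} (ω : Ω) (hω : ω ^ d = 1) (k : ℕ) :
    ω ^ (k % d) = ω ^ k := by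
  conv_rhs => rw [← Nat.div_add_mod k d]
  rw [pow_add, pow_mul, hω, one_pow, one_mul]

section Chi
variable {Ω : Type*} [CommRing Ω] [IsDomain Ω]

variable (n d : ℕ) [NeZero d]

noncomputable def chi (ω : Ω) (hω : ω ^ d = 1) (e : Fin (n + 1) → Fin d) :
    Multiplicative ((Fin (n + 1)) → ZMod d) →* Ω where
  toFun t := ∏ j, ω ^ (((e j : ℕ) : ZMod d) * (Multiplicative.toAdd t j)).val
  map_one' := by
    refine Finset.prod_eq_one fun j _ => ?_
    rw [show Multiplicative.toAdd (1 : Multiplicative ((Fin (n + 1)) → ZMod d)) j = 0 from rfl,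
      mul_zero, ZMod.val_zero, pow_zero]
  map_mul' s t := by
    rw [← Finset.prod_mul_distrib]
    refine Finset.prod_congr rfl fun j _ => ?_
    have : Multiplicative.toAdd (s * t) j = Multiplicative.toAdd s j + Multiplicative.toAdd t j := rfl
    rw [this, mul_add, ZMod.val_add, pow_mod ω hω, pow_add]

lemma chi_apply (ω : Ω) (hω : ω ^ d = 1) (e : Fin (n + 1) → Fin d) (t : Fin (n + 1) → ZMod d) :
    chi n d ω hω e (Multiplicative.ofAdd t) = ∏ j, ω ^ (((e j : ℕ) : ZMod d) * t j).val := rfl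

lemma chi_inj (ω : Ω) (hω : IsPrimitiveRoot ω d) :
    Function.Injective (chi n d ω hω.pow_eq_one) := by
  intro e e' h
  funext j
  apply Fin.ext
  apply hω.pow_inj (e j).2 (e' j).2
  have h1 := congrArg (fun φ : Multiplicative ((Fin (n + 1)) → ZMod d) →* Ω =>
    φ (Multiplicative.ofAdd (Pi.single j (1 : ZMod d) : (Fin (n + 1)) → ZMod d))) h
  simp only [chi_apply] at h1
  have key : ∀ e'' : Fin (n + 1) → Fin d,
      (∏ i, ω ^ (((e'' i : ℕ) : ZMod d) * (Pi.single j (1 : ZMod d) : (Fin (n + 1)) → ZMod d) i).val)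
        = ω ^ (e'' j : ℕ) := by
    intro e''
    rw [Finset.prod_eq_single j
      (fun i _ hij => by rw [Pi.single_eq_of_ne hij, mul_zero, ZMod.val_zero, pow_zero])
      (fun h => absurd (Finset.mem_univ j) h)]
    rw [Pi.single_eq_same, mul_one, ZMod.val_natCast_of_lt (e'' j).2]
  rw [key e, key e'] at h1
  exact h1

lemma char_sum_zero (ω : Ω) (hω : IsPrimitiveRoot ω d) (c : (Fin (n + 1) → Fin d) → Ω)
    (h : ∀ t : Fin (n + 1) → ZMod d,
      ∑ e, c e * chi n d ω hω.pow_eq_one e (Multiplicative.ofAdd t) = 0) :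
    ∀ e, c e = 0 := by
  have li := (linearIndependent_monoidHom (Multiplicative ((Fin (n + 1)) → ZMod d)) Ω).comp
    (chi n d ω hω.pow_eq_one) (chi_inj n d ω hω)
  refine Fintype.linearIndependent_iff.mp li c ?_
  funext t
  have := h (Multiplicative.toAdd t)
  simpa [Finset.sum_apply, smul_eq_mul] using this

end Chi


section Evt
variable (n d : ℕ) (a : Fin (n + 1) → F) (hd : 0 < d) (ω : Om F) (hω : ω ^ d = 1)
  (t : Fin (n + 1) → ZMod d)

noncomputable def valt (i : Fin (n + 2)) : Om F :=
  if h : i.1 = 0 then tau F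
  else ω ^ (t ⟨i.1 - 1, by have := i.2; omega⟩).val * bet n d a hd i.1

lemma valt_succ (j : Fin (n + 1)) :
    valt n d a hd ω t j.succ = ω ^ (t j).val * bet n d a hd (j.1 + 1) := by
  rw [valt, dif_neg (by simp)]
  congr 2

include hω in
lemma valt_pow_castSucc (j : Fin (n + 1)) :
    valt n d a hd ω t j.castSucc ^ d = bet n d a hd j.1 ^ d := by
  by_cases h : j.1 = 0
  · have h1 : valt n d a hd ω t j.castSucc = tau F := by rw [valt]; exact dif_pos h
    rw [h1, show bet n d a hd j.1 = tau F from by rw [h]; rfl]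
  · have h1 : valt n d a hd ω t j.castSucc
        = ω ^ (t ⟨j.castSucc.1 - 1, by have := j.castSucc.2; omega⟩).val
            * bet n d a hd j.castSucc.1 := by
      rw [valt]; exact dif_neg h
    rw [h1, mul_pow, ← pow_mul, mul_comm ((t _).val) d, pow_mul, hω, one_pow, one_mul]
    rfl

lemma aF_eq (j : Fin (n + 1)) : aF n a j.1 = a j := by
  rw [aF, dif_pos j.2]

noncomputable def evtQ : QRing n d a →+* Om F := by
  refine Ideal.Quotient.lift _ (eval₂Hom (cF (F := F)) (valt n d a hd ω t)) ?_
  have hle : Ideal.span (Set.range (gPoly (n + 2) d a))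
      ≤ RingHom.ker (eval₂Hom (cF (F := F)) (valt n d a hd ω t)) := by
    rw [Ideal.span_le]
    rintro _ ⟨j, rfl⟩
    have hg : gPoly (n + 2) d a j = X j.castSucc ^ d - X j.succ ^ d - C (a j) := rfl
    rw [SetLike.mem_coe, RingHom.mem_ker, hg, map_sub, map_sub, map_pow, map_pow,
      eval₂Hom_X', eval₂Hom_X', eval₂Hom_C, valt_pow_castSucc n d a hd ω hω,
      valt_succ, mul_pow, ← pow_mul, mul_comm ((t j).val) d, pow_mul, hω, one_pow, one_mul,
      bet_spec, aF_eq]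
    ring
  exact fun p hp => hle hp

lemma evtQ_mk (p : MvPolynomial (Fin (n + 2)) F) :
    evtQ n d a hd ω hω t (mkQ n d a p) = eval₂Hom (cF (F := F)) (valt n d a hd ω t) p :=
  rfl

lemma evtQ_bb (e : Fin (n + 1) → Fin d) :
    evtQ n d a hd ω hω t (bb n d a e)
      = ∏ j, (ω ^ (t j).val * bet n d a hd (j.1 + 1)) ^ (e j : ℕ) := by
  rw [bb, map_prod]
  refine Finset.prod_congr rfl fun j _ => ?_
  rw [map_pow]
  congr 1
  rw [show xv n d a j.succ = mkQ n d a (X j.succ) from rfl, evtQ_mk, eval₂Hom_X', valt_succ]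

lemma evtQ_aeval (f : Polynomial F) :
    evtQ n d a hd ω hω t (Polynomial.aeval (x1 n d a) f) = evt' f := by
  rw [Polynomial.aeval_def, Polynomial.hom_eval₂]
  have h1 : (evtQ n d a hd ω hω t).comp (algebraMap F (QRing n d a)) = cF (F := F) := by
    ext c
    rw [RingHom.comp_apply, algebraMap_eq_cQ, cQ, RingHom.comp_apply, evtQ_mk, eval₂Hom_C]
  have h2 : evtQ n d a hd ω hω t (x1 n d a) = tau F := by
    rw [x1, xv, evtQ_mk, eval₂Hom_X', valt, dif_pos (by simp)]
  rw [h1, h2, evt'_eq]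

end Evt

lemma omega_zmod_pow {d : ℕ} [NeZero d] {Ω : Type*} [CommRing Ω] (ω : Ω) (hω : ω ^ d = 1)
    (x : Fin d) (y : ZMod d) :
    ω ^ (((x : ℕ) : ZMod d) * y).val = (ω ^ y.val) ^ (x : ℕ) := by
  rw [ZMod.val_mul, ZMod.val_natCast_of_lt x.2, pow_mod ω hω, ← pow_mul, mul_comm]

lemma indep (hd2 : 2 ≤ d) (hdF : (d : F) ≠ 0) (f : (Fin (n + 1) → Fin d) → Polynomial F)
    (hsum : ∑ e, Polynomial.aeval (x1 n d a) (f e) * bb n d a e = 0) : ∀ e, f e = 0 := by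
  have hd : 0 < d := by omega
  obtain ⟨ω, hω⟩ := exists_omega d hd hdF
  haveI : NeZero d := ⟨by omega⟩
  set c : (Fin (n + 1) → Fin d) → Om F :=
    fun e => evt' (f e) * ∏ j, bet n d a hd (j.1 + 1) ^ (e j : ℕ) with hc
  have hzero : ∀ e, c e = 0 := by
    apply char_sum_zero n d ω hω
    intro t
    have h1 := congrArg (evtQ n d a hd ω hω.pow_eq_one t) hsum
    rw [map_zero, map_sum] at h1
    rw [← h1]
    refine Finset.sum_congr rfl fun e _ => ?_
    rw [map_mul, evtQ_aeval, evtQ_bb, chi_apply, hc]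
    simp only [mul_pow]
    rw [Finset.prod_mul_distrib]
    have h3 : ∀ j : Fin (n + 1), ω ^ (((e j : ℕ) : ZMod d) * t j).val
        = (ω ^ (t j).val) ^ (e j : ℕ) := fun j => omega_zmod_pow ω hω.pow_eq_one _ _
    rw [Finset.prod_congr rfl fun j _ => h3 j]
    ring
  intro e
  have h2 := hzero e
  rw [hc] at h2
  have h4 : (∏ j, bet n d a hd (j.1 + 1) ^ (e j : ℕ)) ≠ 0 :=
    Finset.prod_ne_zero_iff.2 fun j _ => pow_ne_zero _ (bet_ne n d a hd _)
  have h5 : evt' (f e) = 0 := by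
    rcases mul_eq_zero.mp h2 with h | h
    · exact h
    · exact absurd h h4
  apply evt'_inj
  rw [h5, map_zero]

section Main

variable (n d : ℕ) (a : Fin (n + 1) → F) [IsDomain (QRing n d a)]

noncomputable def aM : QRing n d a →+* FractionRing (QRing n d a) := algebraMap _ _

noncomputable def PhiL : Polynomial F →+* FractionRing (QRing n d a) :=
  (aM n d a).comp (Polynomial.aeval (x1 n d a)).toRingHom

noncomputable def bL (e : Fin (n + 1) → Fin d) : FractionRing (QRing n d a) :=
  aM n d a (bb n d a e)

lemma aM_inj : Function.Injective (aM n d a) := IsFractionRing.injective _ _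

lemma PhiL_aeval (f : Polynomial F) :
    PhiL n d a f = aM n d a (Polynomial.aeval (x1 n d a) f) := rfl

lemma PhiL_ne (hd2 : 2 ≤ d) (hdF : (d : F) ≠ 0) {f : Polynomial F} (hf : f ≠ 0) :
    PhiL n d a f ≠ 0 := by
  intro h0
  have hd : 0 < d := by omega
  have h1 : Polynomial.aeval (x1 n d a) f = 0 :=
    aM_inj n d a (by rw [← PhiL_aeval, h0, map_zero])
  set e0 : Fin (n + 1) → Fin d := fun _ => ⟨0, hd⟩ with he0
  have hsum : ∑ e, Polynomial.aeval (x1 n d a) (if e = e0 then f else 0)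
      * bb n d a e = 0 := by
    rw [Finset.sum_eq_single e0 (fun e _ hne => by rw [if_neg hne, map_zero, zero_mul])
      (fun h => absurd (Finset.mem_univ e0) h)]
    rw [if_pos rfl, h1, zero_mul]
  have h2 := indep n d a hd2 hdF (fun e => if e = e0 then f else 0) hsum e0
  rw [if_pos rfl] at h2
  exact hf h2

theorem main (hd2 : 2 ≤ d) (hdF : (d : F) ≠ 0)
    (K : Subfield (FractionRing (QRing n d a)))
    (hK : K = Subfield.closure
        (Set.range ((algebraMap (QRing n d a) (FractionRing (QRing n d a))).comp
            ((Ideal.Quotient.mk (Ideal.span (Set.range (gPoly (n + 2) d a)))).comp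
              (MvPolynomial.C))) ∪
          {algebraMap (QRing n d a) (FractionRing (QRing n d a))
            (Ideal.Quotient.mk (Ideal.span (Set.range (gPoly (n + 2) d a)))
              (MvPolynomial.X ⟨0, by omega⟩))})) :
    FiniteDimensional K (FractionRing (QRing n d a)) ∧
      Module.finrank K (FractionRing (QRing n d a)) = d ^ (n + 1) := by
  have hd : 0 < d := by omega
  have h0fin : (⟨0, by omega⟩ : Fin (n + 2)) = 0 := by ext; simp
  have hKc : ∀ c : F, aM n d a (cQ n d a c) ∈ K := fun c => by
    rw [hK]; exact Subfield.subset_closure (Or.inl ⟨c, rfl⟩)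
  have hKx : aM n d a (x1 n d a) ∈ K := by
    rw [hK]
    refine Subfield.subset_closure (Or.inr ?_)
    rw [Set.mem_singleton_iff, x1, xv, h0fin]
    rfl
  have hKf : ∀ f : Polynomial F, PhiL n d a f ∈ K := by
    intro f
    induction f using Polynomial.induction_on' with
    | add p q hp hq => rw [map_add]; exact add_mem hp hq
    | monomial k c =>
      have h1 : PhiL n d a (Polynomial.monomial k c)
          = aM n d a (cQ n d a c) * (aM n d a (x1 n d a)) ^ k := by
        rw [PhiL_aeval, Polynomial.aeval_monomial, map_mul, map_pow, algebraMap_eq_cQ]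
      rw [h1]; exact mul_mem (hKc c) (pow_mem hKx k)
  -- every element of K is a fraction of polynomial images
  have hfrac : ∀ x : FractionRing (QRing n d a), x ∈ K → ∃ fn fd : Polynomial F, fd ≠ 0 ∧
      x * PhiL n d a fd = PhiL n d a fn := by
    intro x hmem
    rw [hK, Subfield.mem_closure_iff] at hmem
    obtain ⟨y, hy, z, hz, hyz⟩ := hmem
    have hsub : Subring.closure
        (Set.range ((algebraMap (QRing n d a) (FractionRing (QRing n d a))).comp
            ((Ideal.Quotient.mk (Ideal.span (Set.range (gPoly (n + 2) d a)))).comp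
              (MvPolynomial.C))) ∪
          {algebraMap (QRing n d a) (FractionRing (QRing n d a))
            (Ideal.Quotient.mk (Ideal.span (Set.range (gPoly (n + 2) d a)))
              (MvPolynomial.X ⟨0, by omega⟩))}) ≤ (PhiL n d a).range := by
      rw [Subring.closure_le]
      rintro w (⟨c, rfl⟩ | rfl)
      · exact ⟨Polynomial.C c, by rw [PhiL_aeval, Polynomial.aeval_C]; rfl⟩
      · refine ⟨Polynomial.X, ?_⟩
        rw [PhiL_aeval, Polynomial.aeval_X]
        exact congrArg (aM n d a) (congrArg (mkQ n d a) (congrArg X h0fin.symm))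
    obtain ⟨fy, hfy⟩ := hsub hy
    obtain ⟨fz, hfz⟩ := hsub hz
    by_cases hz0 : z = 0
    · refine ⟨0, 1, one_ne_zero, ?_⟩
      rw [map_one, map_zero, mul_one, ← hyz, hz0, div_zero]
    · refine ⟨fy, fz, ?_, ?_⟩
      · rintro rfl; rw [map_zero] at hfz; exact hz0 hfz.symm
      · rw [hfy, hfz, ← hyz, div_mul_cancel₀ _ hz0]
  -- linear independence of bL over K
  have hli : LinearIndependent K (bL n d a) := by
    rw [Fintype.linearIndependent_iff]
    intro g hg e
    choose fn fd hfd hrel using fun e => hfrac (g e) (g e).2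
    have hGe : ∀ e : Fin (n + 1) → Fin d, (∏ e' ∈ Finset.univ.erase e, fd e') ≠ 0 :=
      fun e => Finset.prod_ne_zero_iff.2 fun e' _ => hfd e'
    have hgcoe : ∑ e, (g e : FractionRing (QRing n d a)) * bL n d a e = 0 := by
      rw [← hg]
      exact Finset.sum_congr rfl fun e _ => rfl
    have hmain : ∑ e, Polynomial.aeval (x1 n d a)
        (fn e * ∏ e' ∈ Finset.univ.erase e, fd e') * bb n d a e = 0 := by
      apply aM_inj n d a
      rw [map_sum, map_zero]
      have expand : ∀ e : Fin (n + 1) → Fin d,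
          aM n d a (Polynomial.aeval (x1 n d a) (fn e * ∏ e' ∈ Finset.univ.erase e, fd e')
              * bb n d a e)
            = ((g e : FractionRing (QRing n d a)) * bL n d a e) * PhiL n d a (∏ e', fd e') := by
        intro e
        rw [map_mul, ← PhiL_aeval, map_mul, ← hrel e,
          show (∏ e', fd e') = fd e * ∏ e' ∈ Finset.univ.erase e, fd e' from
            (Finset.mul_prod_erase _ _ (Finset.mem_univ e)).symm,
          map_mul]
        rw [bL]
        ring
      rw [Finset.sum_congr rfl (fun e _ => expand e), ← Finset.sum_mul, hgcoe, zero_mul]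
    have hzero := indep n d a hd2 hdF _ hmain
    have h1 : fn e = 0 := by
      rcases mul_eq_zero.mp (hzero e) with h | h
      · exact h
      · exact absurd h (hGe e)
    have h2 : (g e : FractionRing (QRing n d a)) * PhiL n d a (fd e) = 0 := by
      rw [hrel e, h1, map_zero]
    have h3 : (g e : FractionRing (QRing n d a)) = 0 := by
      rcases mul_eq_zero.mp h2 with h | h
      · exact h
      · exact absurd h (PhiL_ne n d a hd2 hdF (hfd e))
    exact Subtype.ext h3
  -- spanning
  set W := Submodule.span K (Set.range (bL n d a)) with hW
  have hbLW : ∀ e, bL n d a e ∈ W := fun e => Submodule.subset_span ⟨e, rfl⟩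
  have hsmulW : ∀ (f : Polynomial F) (l : FractionRing (QRing n d a)), l ∈ W →
      PhiL n d a f * l ∈ W := by
    intro f l hl
    have h1 : PhiL n d a f * l = (⟨PhiL n d a f, hKf f⟩ : K) • l := rfl
    rw [h1]; exact Submodule.smul_mem _ _ hl
  have haMW : ∀ r : QRing n d a, aM n d a r ∈ W := by
    intro r
    have hr := span_top n d a hd r
    induction hr using Submodule.span_induction with
    | mem w hw => obtain ⟨e, rfl⟩ := hw; exact hbLW e
    | zero => rw [map_zero]; exact W.zero_mem
    | add x y _ _ hx hy => rw [map_add]; exact W.add_mem hx hy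
    | smul f x _ hx => rw [smul_eq, map_mul, ← PhiL_aeval]; exact hsmulW f _ hx
  have hmulW : ∀ x y : FractionRing (QRing n d a), x ∈ W → y ∈ W → x * y ∈ W := by
    intro x y hx hy
    induction hx using Submodule.span_induction with
    | mem w hw =>
      obtain ⟨e, rfl⟩ := hw
      induction hy using Submodule.span_induction with
      | mem w' hw' => obtain ⟨e', rfl⟩ := hw'; rw [bL, bL, ← map_mul]; exact haMW _
      | zero => rw [mul_zero]; exact W.zero_mem
      | add u v _ _ hu hv => rw [mul_add]; exact W.add_mem hu hv
      | smul κ u _ hu => rw [mul_smul_comm]; exact W.smul_mem _ hu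
    | zero => rw [zero_mul]; exact W.zero_mem
    | add u v _ _ hu hv => rw [add_mul]; exact W.add_mem hu hv
    | smul κ u _ hu => rw [smul_mul_assoc]; exact W.smul_mem _ hu
  have honeW : (1 : FractionRing (QRing n d a)) ∈ W := by
    rw [← map_one (aM n d a)]; exact haMW 1
  let T : Subalgebra K (FractionRing (QRing n d a)) := W.toSubalgebra honeW hmulW
  haveI hfinW : FiniteDimensional K W := FiniteDimensional.span_of_finite K (Set.finite_range _)
  haveI hfinT : FiniteDimensional K T := hfinW
  have hinvW : ∀ l : FractionRing (QRing n d a), l ∈ W → l ≠ 0 → l⁻¹ ∈ W := by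
    intro l hl hl0
    have hint : IsIntegral K (⟨l, hl⟩ : T) := IsIntegral.of_finite K _
    have halg : IsAlgebraic K l := (hint.map T.val).isAlgebraic
    exact T.inv_mem_of_algebraic (x := ⟨l, hl⟩) halg
  have hWtop : W = ⊤ := by
    rw [Submodule.eq_top_iff']
    intro l
    obtain ⟨r, s, hs, rfl⟩ := IsFractionRing.div_surjective (A := QRing n d a) l
    have hs0 : aM n d a s ≠ 0 := fun h =>
      (mem_nonZeroDivisors_iff_ne_zero.mp hs) (aM_inj n d a (by rw [h, map_zero]))
    rw [div_eq_mul_inv]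
    exact hmulW _ _ (haMW r) (hinvW _ (haMW s) hs0)
  let bas : Module.Basis _ K (FractionRing (QRing n d a)) := Module.Basis.mk hli (by rw [← hW, hWtop])
  refine ⟨Module.Finite.of_basis bas, ?_⟩
  rw [Module.finrank_eq_card_basis bas]
  simp [Fintype.card_fun]

end Main

end S17

set_option synthInstance.maxHeartbeats 1000000 in
set_option maxHeartbeats 2000000 in
/-- `K` is the subfield of the fraction field `L` of `R` generated over (the image of) the
base field `k` by the image of `x_1`; then `L/K` is finite of degree `d^(m−1)`. -/
theorem statement17 (q : ℕ) [Fact q.Prime] (m d : ℕ) (hm : 2 ≤ m) (hd : 2 ≤ d)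
    (hqd : ¬ q ∣ d) (a : Fin (m - 1) → AlgebraicClosure (ZMod q))
    (hinj : Function.Injective (partialSum a))
    (hne : ∀ i, partialSum a i ≠ 0)
    [IsDomain (curveRing q m d a)]
    (K : Subfield (FractionRing (curveRing q m d a)))
    (hK : K = Subfield.closure
        (Set.range ((algebraMap (curveRing q m d a) (FractionRing (curveRing q m d a))).comp
            ((Ideal.Quotient.mk (Ideal.span (Set.range (gPoly m d a)))).comp
              (MvPolynomial.C))) ∪
          {algebraMap (curveRing q m d a) (FractionRing (curveRing q m d a))
            (Ideal.Quotient.mk (Ideal.span (Set.range (gPoly m d a)))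
              (MvPolynomial.X ⟨0, by omega⟩))})) :
    FiniteDimensional K (FractionRing (curveRing q m d a)) ∧
      Module.finrank K (FractionRing (curveRing q m d a)) = d ^ (m - 1) := by
  obtain ⟨n, rfl⟩ : ∃ n, m = n + 2 := ⟨m - 2, by omega⟩
  have hdF : ((d : ℕ) : AlgebraicClosure (ZMod q)) ≠ 0 := by
    have h1 : ((d : ℕ) : ZMod q) ≠ 0 := by
      rw [Ne, ZMod.natCast_eq_zero_iff]
      exact hqd
    intro h
    apply h1
    apply (algebraMap (ZMod q) (AlgebraicClosure (ZMod q))).injective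
    rw [map_natCast, h, map_zero]
  exact S17.main n d a hd hdF K hK
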